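/- If G = (V, E) is a d-regular finite simple graph and k ≥ 2 is an integer with d ≥ k − 1, then ψ_k(G) ≥ ((d − k + 2)/(2d − k + 2))·|V|. -/

import Mathlib

open SimpleGraph

/-- `G` contains a path of order `k` (i.e., with `k` vertices). -/
def HasPathOfOrder {V : Type*} (G : SimpleGraph V) (k : ℕ) : Prop :=
  ∃ (u v : V) (w : G.Walk u v), w.IsPath ∧ w.length + 1 = k

/-- `F` is a `k`-path vertex cover of `G`: the subgraph induced on the
complement of `F` contains no path of order `k`. -/
def IsPathVertexCover {V : Type*} (G : SimpleGraph V) (k : ℕ) (F : Finset V) : Prop :=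
  ¬ HasPathOfOrder (G.induce ((↑F : Set V)ᶜ)) k

/-- `psi G k` is the minimum cardinality of a `k`-path vertex cover of `G`. -/
noncomputable def psi {V : Type*} [Fintype V] (G : SimpleGraph V) (k : ℕ) : ℕ :=
  sInf {n | ∃ F : Finset V, IsPathVertexCover G k F ∧ F.card = n}

namespace PVC
open SimpleGraph Walk Finset
variable {V : Type*} {G : SimpleGraph V}

open SimpleGraph




/-- Take the first `n` darts of a walk. -/
def takeW : {u v : V} → (p : G.Walk u v) → (n : ℕ) → G.Walk u (p.getVert n)
  | _, _, .nil, _ => .nil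
  | _, _, .cons _ _, 0 => .nil
  | _, _, .cons h q, n + 1 => .cons h (takeW q n)

/-- Drop the first `n` darts of a walk. -/
def dropW : {u v : V} → (p : G.Walk u v) → (n : ℕ) → G.Walk (p.getVert n) v
  | _, _, .nil, _ => .nil
  | _, _, .cons h q, 0 => .cons h q
  | _, _, .cons _ q, n + 1 => dropW q n

@[simp] lemma dropW_zero {u v : V} (p : G.Walk u v) : dropW p 0 = p.copy (p.getVert_zero).symm rfl := by
  cases p <;> rfl

lemma takeW_append_dropW {u v : V} (p : G.Walk u v) (n : ℕ) :
    (takeW p n).append (dropW p n) = p := by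
  induction p generalizing n with
  | nil => cases n <;> rfl
  | cons h q ih =>
    cases n with
    | zero => rfl
    | succ n => simpa [takeW, dropW] using ih n

lemma length_takeW {u v : V} (p : G.Walk u v) (n : ℕ) (hn : n ≤ p.length) :
    (takeW p n).length = n := by
  induction p generalizing n with
  | nil => simp at hn; simp [hn, takeW]
  | cons h q ih =>
    cases n with
    | zero => rfl
    | succ n => simpa [takeW] using ih n (by simpa using hn)

lemma length_dropW {u v : V} (p : G.Walk u v) (n : ℕ) :
    (dropW p n).length = p.length - n := by
  induction p generalizing n with
  | nil => cases n <;> simp [dropW]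
  | cons h q ih =>
    cases n with
    | zero => simp [dropW]; rfl
    | succ n => simpa [dropW] using ih n

lemma support_dropW_cons {u v : V} (p : G.Walk u v) (n : ℕ) (hn : n < p.length) :
    (dropW p n).support = p.getVert n :: (dropW p (n + 1)).support := by
  induction p generalizing n with
  | nil => simp at hn
  | cons h q ih =>
    cases n with
    | zero => simp [dropW]; rfl
    | succ n => simpa [dropW] using ih n (by simpa using hn)

lemma support_eq_map_getVert {u v : V} (p : G.Walk u v) :
    p.support = (List.range (p.length + 1)).map p.getVert := by
  induction p with
  | nil => rfl
  | cons h q ih =>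
    simp [support_cons, ih, List.range_succ_eq_map, List.map_map, Function.comp_def]


/-- Lift a walk whose support lies in `S` to the induced subgraph on `S`. -/
def liftWalk {S : Set V} : {u v : V} → (p : G.Walk u v) → (hp : ∀ x ∈ p.support, x ∈ S) →
    (G.induce S).Walk ⟨u, hp u p.start_mem_support⟩ ⟨v, hp v p.end_mem_support⟩
  | _, _, .nil, _ => .nil
  | _, _, .cons h q, hp =>
    .cons (by exact h) (liftWalk q (fun x hx => hp x (by simp [hx])))

lemma liftWalk_support {S : Set V} {u v : V} (p : G.Walk u v) (hp : ∀ x ∈ p.support, x ∈ S) :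
    (liftWalk p hp).support.map Subtype.val = p.support := by
  induction p with
  | nil => rfl
  | cons h q ih => simp only [liftWalk]; exact congrArg (List.cons _) (ih _)

lemma liftWalk_length {S : Set V} {u v : V} (p : G.Walk u v) (hp : ∀ x ∈ p.support, x ∈ S) :
    (liftWalk p hp).length = p.length := by
  induction p with
  | nil => rfl
  | cons h q ih => simp only [liftWalk]; exact congrArg Nat.succ (ih _)

lemma liftWalk_isPath {S : Set V} {u v : V} (p : G.Walk u v) (hp : ∀ x ∈ p.support, x ∈ S)
    (h : p.IsPath) : (liftWalk p hp).IsPath := by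
  rw [isPath_def]
  have h2 := h.support_nodup
  rw [← liftWalk_support p hp] at h2
  exact h2.of_map

lemma support_subset_of_closed {P : V → Prop} (hP : ∀ ⦃x y⦄, G.Adj x y → P x → P y) :
    ∀ {u v : V} (q : G.Walk u v), P u → ∀ x ∈ q.support, P x := by
  intro u v q
  induction q with
  | nil => intro hu x hx; simp at hx; rwa [hx]
  | cons h q ih =>
    intro hu x hx
    rw [support_cons] at hx
    rcases List.mem_cons.mp hx with rfl | hx
    · exact hu
    · exact ih (hP h hu) x hx



theorem lemR {V : Type*} [Fintype V] [DecidableEq V] (G : SimpleGraph V) [DecidableRel G.Adj] (k : ℕ)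
    (hk : 2 ≤ k)
    (hconn : ∀ u v : V, G.Reachable u v)
    (hdeg : ∀ v, k - 1 ≤ 2 * G.degree v)
    (hcard : k ≤ Fintype.card V) :
    ∃ (u v : V) (w : G.Walk u v), w.IsPath ∧ w.length + 1 = k := by
  have hV : Nonempty V := Fintype.card_pos_iff.mp (lt_of_lt_of_le (by omega) hcard)
  obtain ⟨v0⟩ := hV
  set S : Set ℕ := {n | ∃ (u v : V) (w : G.Walk u v), w.IsPath ∧ w.length = n} with hS
  have hne : S.Nonempty := ⟨0, v0, v0, .nil, IsPath.nil, rfl⟩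
  have hbdd : BddAbove S := ⟨Fintype.card V, by
    rintro n ⟨u, v, w, hw, hl⟩
    exact hl ▸ hw.length_lt.le⟩
  obtain ⟨x, y, p, hp, hpl⟩ := Nat.sSup_mem hne hbdd
  set ℓ := sSup S with hℓ
  have hmax : ∀ {a b : V} (q : G.Walk a b), q.IsPath → q.length ≤ ℓ :=
    fun q hq => le_csSup hbdd ⟨_, _, q, hq, rfl⟩
  by_cases hcase : k ≤ ℓ + 1
  · refine ⟨x, p.getVert (k - 1), takeW p (k - 1), ?_, ?_⟩
    · have hsplit := takeW_append_dropW p (k - 1)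
      have hp' := hp
      rw [← hsplit] at hp'
      exact hp'.of_append_left
    · rw [length_takeW p (k - 1) (by omega)]
      omega
  · exfalso
    push_neg at hcase
    have hℓk : ℓ + 1 ≤ k - 1 := by omega
    -- all neighbors of the endpoints lie on the path
    have hnx : ∀ z, G.Adj x z → z ∈ p.support := by
      intro z hz
      by_contra hzs
      have hP : (Walk.cons hz.symm p).IsPath := hp.cons hzs
      have := hmax _ hP
      simp only [length_cons] at this
      omega
    have hny : ∀ z, G.Adj y z → z ∈ p.support := by
      intro z hz
      by_contra hzs
      have hP : (Walk.cons hz.symm p.reverse).IsPath := hp.reverse.cons (by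
        rwa [support_reverse, List.mem_reverse])
      have := hmax _ hP
      simp only [length_cons, length_reverse] at this
      omega
    -- index sets
    set A : Finset ℕ := (Finset.range ℓ).filter (fun i => G.Adj x (p.getVert (i + 1))) with hA
    set B : Finset ℕ := (Finset.range ℓ).filter (fun i => G.Adj y (p.getVert i)) with hB
    have hAcard : G.degree x ≤ A.card := by
      have hsub : G.neighborFinset x ⊆ A.image (fun i => p.getVert (i + 1)) := by
        intro z hz
        rw [mem_neighborFinset] at hz
        obtain ⟨m, hm, hmle⟩ := (mem_support_iff_exists_getVert).mp (hnx z hz)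
        have hm0 : m ≠ 0 := by
          rintro rfl
          rw [getVert_zero] at hm
          exact G.ne_of_adj hz hm
        obtain ⟨i, rfl⟩ := Nat.exists_eq_add_one_of_ne_zero hm0
        have hiA : i ∈ A := by
          rw [hA, Finset.mem_filter, Finset.mem_range]
          refine ⟨by omega, ?_⟩
          rwa [hm]
        exact Finset.mem_image.mpr ⟨i, hiA, hm⟩
      calc G.degree x = (G.neighborFinset x).card := rfl
        _ ≤ (A.image (fun i => p.getVert (i + 1))).card := Finset.card_le_card hsub
        _ ≤ A.card := Finset.card_image_le
    have hBcard : G.degree y ≤ B.card := by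
      have hsub : G.neighborFinset y ⊆ B.image (fun i => p.getVert i) := by
        intro z hz
        rw [mem_neighborFinset] at hz
        obtain ⟨m, hm, hmle⟩ := (mem_support_iff_exists_getVert).mp (hny z hz)
        have hmℓ : m ≠ p.length := by
          rintro rfl
          rw [getVert_length] at hm
          exact G.ne_of_adj hz hm
        have hmB : m ∈ B := by
          rw [hB, Finset.mem_filter, Finset.mem_range]
          refine ⟨by omega, ?_⟩
          rwa [hm]
        exact Finset.mem_image.mpr ⟨m, hmB, hm⟩
      calc G.degree y = (G.neighborFinset y).card := rfl
        _ ≤ (B.image (fun i => p.getVert i)).card := Finset.card_le_card hsub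
        _ ≤ B.card := Finset.card_image_le
    -- A and B intersect
    have hABsub : A ∪ B ⊆ Finset.range ℓ := by
      rw [hA, hB]
      exact Finset.union_subset (Finset.filter_subset _ _) (Finset.filter_subset _ _)
    have hinter : (A ∩ B).Nonempty := by
      rw [← Finset.card_pos]
      have h1 := Finset.card_union_add_card_inter A B
      have h2 : (A ∪ B).card ≤ ℓ := by
        simpa using Finset.card_le_card hABsub
      have h3 := hdeg x
      have h4 := hdeg y
      omega
    obtain ⟨i, hi⟩ := hinter
    rw [Finset.mem_inter, hA, hB, Finset.mem_filter, Finset.mem_filter, Finset.mem_range] at hi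
    obtain ⟨⟨hiℓ, hxA⟩, _, hyB⟩ := hi
    -- build the closed walk through all of p's support
    set t := takeW p i with ht
    set r := dropW p (i + 1) with hr
    set c : G.Walk x x :=
      t.append (Walk.cons hyB.symm ((r.reverse).append (Walk.cons hxA.symm Walk.nil))) with hc
    have htlen : t.length = i := length_takeW p i (by omega)
    have hrlen : r.length = ℓ - (i + 1) := by rw [hr, length_dropW, hpl]
    have hclen : c.length = ℓ + 1 := by
      rw [hc]
      simp only [length_append, length_cons, length_reverse, length_nil, htlen, hrlen]
      omega
    -- support bookkeeping
    have hsplit : p.support = t.support ++ r.support := by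
      have h1 : p.support = t.support ++ (dropW p i).support.tail := by
        conv_lhs => rw [← takeW_append_dropW p i]
        rw [support_append]
      have h2 : (dropW p i).support = p.getVert i :: r.support :=
        support_dropW_cons p i (by omega)
      rw [h1, h2]
      simp
    have hcsupp : c.support = t.support ++ (r.support.reverse ++ [x]) := by
      rw [hc, support_append, support_cons, List.tail_cons, support_append, support_reverse]
      simp
    have htne : t.support = x :: t.support.tail := support_eq_cons t
    have hperm : List.Perm c.support.tail p.support := by
      rw [hcsupp, hsplit, htne]
      simp only [List.cons_append, List.tail_cons]
      refine List.Perm.trans (List.Perm.append_left _ (List.perm_append_comm)) ?_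
      rw [← List.append_assoc]
      refine List.Perm.trans (List.Perm.append_right _ (List.perm_append_comm)) ?_
      refine List.Perm.trans (List.Perm.append_left _ (List.reverse_perm _)) ?_
      simp
      conv_lhs => rw [htne]
      exact List.Perm.refl _
    have hctail_nodup : c.support.tail.Nodup := hperm.nodup_iff.mpr hp.support_nodup
    have hcmem : ∀ z, z ∈ c.support ↔ z ∈ p.support := by
      intro z
      rw [support_eq_cons c, List.mem_cons]
      constructor
      · rintro (rfl | hz)
        · exact p.start_mem_support
        · exact hperm.mem_iff.mp hz
      · intro hz
        exact Or.inr (hperm.mem_iff.mpr hz)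
    -- a vertex outside the path
    have hout : ∃ b, b ∉ p.support := by
      by_contra hall
      push_neg at hall
      have hsub : (Finset.univ : Finset V) ⊆ p.support.toFinset := by
        intro z _
        exact List.mem_toFinset.mpr (hall z)
      have h1 : Fintype.card V ≤ p.support.toFinset.card := by
        simpa [Finset.card_univ] using Finset.card_le_card hsub
      have h2 : p.support.toFinset.card ≤ p.support.length := p.support.toFinset_card_le
      rw [length_support, hpl] at h2
      omega
    obtain ⟨b, hb⟩ := hout
    -- crossing dart
    obtain ⟨q0⟩ := hconn x b
    obtain ⟨dart, _, hdfst, hdsnd⟩ :=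
      q0.exists_boundary_dart {z | z ∈ p.support} p.start_mem_support hb
    set a := dart.fst with ha'
    have hab : G.Adj a dart.snd := dart.adj
    have haP : a ∈ p.support := hdfst
    have hbP : dart.snd ∉ p.support := hdsnd
    -- rotate the closed walk to start at a
    have hac : a ∈ c.support := (hcmem a).mpr haP
    set c' := c.rotate a hac with hc'
    have hc'tail : List.Perm c'.support.tail c.support.tail := (support_rotate c a hac).perm
    have hc'len : c'.length = ℓ + 1 := by
      have h2 : c'.darts.length = c.darts.length := (rotate_darts c a hac).perm.length_eq
      rw [length_darts, length_darts] at h2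
      rw [hc'] at *
      omega
    have hc'nil : ¬ c'.Nil := by
      rw [not_nil_iff_lt_length]
      omega
    obtain ⟨z, hzadj, q, hq⟩ := (not_nil_iff).mp hc'nil
    have hqsupp : q.support = c'.support.tail := by rw [hq, support_cons, List.tail_cons]
    have hqnodup : q.support.Nodup := by
      rw [hqsupp]
      exact hc'tail.nodup_iff.mpr hctail_nodup
    have hqpath : q.IsPath := (Walk.isPath_def q).mpr hqnodup
    have hqlen : q.length = ℓ := by
      have : c'.length = q.length + 1 := by rw [hq, length_cons]
      omega
    have hqsub : ∀ w ∈ q.support, w ∈ p.support := by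
      intro w hw
      rw [hqsupp] at hw
      have : w ∈ c.support.tail := hc'tail.mem_iff.mp hw
      exact hperm.mem_iff.mp this
    have hbq : dart.snd ∉ q.reverse.support := by
      rw [support_reverse, List.mem_reverse]
      intro h
      exact hbP (hqsub _ h)
    -- the longer path
    have hP : (Walk.cons hab.symm (q.reverse)).IsPath := hqpath.reverse.cons hbq
    have := hmax _ hP
    simp only [length_cons, length_reverse, hqlen] at this
    omega


theorem lemA {V : Type*} [Fintype V] [DecidableEq V] (G : SimpleGraph V) [DecidableRel G.Adj]
    (k : ℕ) (hk : 2 ≤ k) :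
    ∀ (n : ℕ) (s : Finset V), s.card ≤ n →
      (¬ ∃ (u v : V) (w : G.Walk u v), w.IsPath ∧ w.length + 1 = k ∧ ∀ x ∈ w.support, x ∈ s) →
      ∑ v ∈ s, (G.neighborFinset v ∩ s).card ≤ (k - 2) * s.card := by
  intro n
  induction n with
  | zero =>
    intro s hs _
    rw [Finset.card_eq_zero.mp (Nat.le_zero.mp hs)]
    simp
  | succ n ih =>
    intro s hs hpath
    by_cases hlow : ∃ v ∈ s, 2 * (G.neighborFinset v ∩ s).card ≤ k - 2
    · obtain ⟨v, hvs, hv⟩ := hlow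
      set s' := s.erase v with hs'
      have hsub : s' ⊆ s := Finset.erase_subset v s
      have hcard' : s'.card ≤ n := by
        have hce : s'.card = s.card - 1 := Finset.card_erase_of_mem hvs
        omega
      have hpath' : ¬ ∃ (u v' : V) (w : G.Walk u v'),
          w.IsPath ∧ w.length + 1 = k ∧ ∀ x ∈ w.support, x ∈ s' := by
        rintro ⟨u, v', w, h1, h2, h3⟩
        exact hpath ⟨u, v', w, h1, h2, fun x hx => hsub (h3 x hx)⟩
      have IH := ih s' hcard' hpath'
      have hsum : ∑ u ∈ s, (G.neighborFinset u ∩ s).card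
          = ∑ u ∈ s', (G.neighborFinset u ∩ s).card + (G.neighborFinset v ∩ s).card := by
        rw [← Finset.sum_erase_add s _ hvs]
      have hstep : ∀ u ∈ s', (G.neighborFinset u ∩ s).card
          ≤ (G.neighborFinset u ∩ s').card + (if G.Adj v u then 1 else 0) := by
        intro u hu
        by_cases hadj : G.Adj v u
        · have : G.neighborFinset u ∩ s ⊆ insert v (G.neighborFinset u ∩ s') := by
            intro w hw
            rw [Finset.mem_inter] at hw
            by_cases hwv : w = v
            · rw [hwv]; exact Finset.mem_insert_self _ _
            · exact Finset.mem_insert_of_mem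
                (Finset.mem_inter.mpr ⟨hw.1, Finset.mem_erase.mpr ⟨hwv, hw.2⟩⟩)
          calc (G.neighborFinset u ∩ s).card
              ≤ (insert v (G.neighborFinset u ∩ s')).card := Finset.card_le_card this
            _ ≤ (G.neighborFinset u ∩ s').card + 1 := Finset.card_insert_le _ _
            _ = (G.neighborFinset u ∩ s').card + (if G.Adj v u then 1 else 0) := by
                rw [if_pos hadj]
        · have : G.neighborFinset u ∩ s ⊆ G.neighborFinset u ∩ s' := by
            intro w hw
            rw [Finset.mem_inter] at hw
            have hwv : w ≠ v := by
              rintro rfl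
              rw [SimpleGraph.mem_neighborFinset] at hw
              exact hadj (hw.1.symm)
            exact Finset.mem_inter.mpr ⟨hw.1, Finset.mem_erase.mpr ⟨hwv, hw.2⟩⟩
          calc (G.neighborFinset u ∩ s).card
              ≤ (G.neighborFinset u ∩ s').card := Finset.card_le_card this
            _ ≤ (G.neighborFinset u ∩ s').card + (if G.Adj v u then 1 else 0) := Nat.le_add_right _ _
      have hfilter : ∀ (t : Finset V) (w : V), G.neighborFinset w ∩ t = t.filter (G.Adj w ·) := by
        intro t w
        ext z
        simp [SimpleGraph.mem_neighborFinset, and_comm]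
      have hsum2 : ∑ u ∈ s', (G.neighborFinset u ∩ s).card
          ≤ ∑ u ∈ s', (G.neighborFinset u ∩ s').card + (G.neighborFinset v ∩ s').card := by
        calc ∑ u ∈ s', (G.neighborFinset u ∩ s).card
            ≤ ∑ u ∈ s', ((G.neighborFinset u ∩ s').card + (if G.Adj v u then 1 else 0)) :=
              Finset.sum_le_sum hstep
          _ = ∑ u ∈ s', (G.neighborFinset u ∩ s').card + ∑ u ∈ s', (if G.Adj v u then 1 else 0) :=
              Finset.sum_add_distrib
          _ = ∑ u ∈ s', (G.neighborFinset u ∩ s').card + (G.neighborFinset v ∩ s').card := by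
              rw [hfilter s' v, Finset.card_filter]
      have hvv' : (G.neighborFinset v ∩ s').card ≤ (G.neighborFinset v ∩ s).card :=
        Finset.card_le_card (Finset.inter_subset_inter le_rfl hsub)
      have hcards : s.card = s'.card + 1 := by
        have hce : s'.card = s.card - 1 := Finset.card_erase_of_mem hvs
        have hpos : 0 < s.card := Finset.card_pos.mpr ⟨v, hvs⟩
        omega
      calc ∑ u ∈ s, (G.neighborFinset u ∩ s).card
          = ∑ u ∈ s', (G.neighborFinset u ∩ s).card + (G.neighborFinset v ∩ s).card := hsum
        _ ≤ (∑ u ∈ s', (G.neighborFinset u ∩ s').card + (G.neighborFinset v ∩ s').card)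
            + (G.neighborFinset v ∩ s).card := by omega
        _ ≤ (k - 2) * s'.card + (k - 2) := by
            have h2 : (G.neighborFinset v ∩ s').card + (G.neighborFinset v ∩ s).card ≤ k - 2 := by
              omega
            omega
        _ = (k - 2) * s.card := by rw [hcards]; ring
    · push_neg at hlow
      have hdeg : ∀ v ∈ s, k - 1 ≤ 2 * (G.neighborFinset v ∩ s).card := by
        intro v hv
        have := hlow v hv
        omega
      rcases s.eq_empty_or_nonempty with rfl | ⟨v₀, hv₀⟩
      · simp
      · -- restricted graph
        set Gs : SimpleGraph V :=
          { Adj := fun a b => a ∈ s ∧ b ∈ s ∧ G.Adj a b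
            symm := by
              constructor
              rintro a b ⟨ha, hb, hab⟩
              exact ⟨hb, ha, hab.symm⟩
            loopless := by
              constructor
              rintro a ⟨_, _, haa⟩
              exact G.loopless.irrefl a haa } with hGs
        letI : DecidableRel Gs.Adj := fun a b =>
          inferInstanceAs (Decidable (a ∈ s ∧ b ∈ s ∧ G.Adj a b))
        letI : DecidablePred (Gs.Reachable v₀) := Classical.decPred _
        set C : Finset V := s.filter (fun u => Gs.Reachable v₀ u) with hC
        have hCs : C ⊆ s := Finset.filter_subset _ _
        have hv₀C : v₀ ∈ C := Finset.mem_filter.mpr ⟨hv₀, Reachable.refl v₀⟩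
        have hclosed : ∀ ⦃a b : V⦄, Gs.Adj a b → a ∈ C → b ∈ C := by
          rintro a b hab haC
          rw [hC, Finset.mem_filter] at haC ⊢
          exact ⟨hab.2.1, haC.2.trans hab.reachable⟩
        have hNC : ∀ u ∈ C, G.neighborFinset u ∩ s = G.neighborFinset u ∩ C := by
          intro u hu
          ext w
          simp only [Finset.mem_inter, SimpleGraph.mem_neighborFinset]
          constructor
          · rintro ⟨h1, h2⟩
            exact ⟨h1, hclosed ⟨hCs hu, h2, h1⟩ hu⟩
          · rintro ⟨h1, h2⟩
            exact ⟨h1, hCs h2⟩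
        by_cases hCk : C.card ≤ k - 1
        · -- small component: split off and recurse
          set s'' := s \ C with hs''
          have hsub : s'' ⊆ s := Finset.sdiff_subset
          have hcard'' : s''.card ≤ n := by
            have h1 : s''.card = s.card - C.card := Finset.card_sdiff_of_subset hCs
            have h2 : 1 ≤ C.card := Finset.card_pos.mpr ⟨v₀, hv₀C⟩
            have h3 := Finset.card_le_card hCs
            omega
          have hpath'' : ¬ ∃ (u v' : V) (w : G.Walk u v'),
              w.IsPath ∧ w.length + 1 = k ∧ ∀ x ∈ w.support, x ∈ s'' := by
            rintro ⟨u, v', w, h1, h2, h3⟩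
            exact hpath ⟨u, v', w, h1, h2, fun x hx => hsub (h3 x hx)⟩
          have IH := ih s'' hcard'' hpath''
          have hCsum : ∀ u ∈ C, (G.neighborFinset u ∩ s).card ≤ k - 2 := by
            intro u hu
            rw [hNC u hu]
            have h1 : G.neighborFinset u ∩ C ⊆ C.erase u := by
              intro w hw
              rw [Finset.mem_inter, SimpleGraph.mem_neighborFinset] at hw
              exact Finset.mem_erase.mpr ⟨(G.ne_of_adj hw.1).symm, hw.2⟩
            have h2 := Finset.card_le_card h1
            rw [Finset.card_erase_of_mem hu] at h2
            have h3 : 1 ≤ C.card := Finset.card_pos.mpr ⟨v₀, hv₀C⟩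
            omega
          have hOut : ∀ u ∈ s'', G.neighborFinset u ∩ s = G.neighborFinset u ∩ s'' := by
            intro u hu
            ext w
            simp only [Finset.mem_inter, SimpleGraph.mem_neighborFinset, hs'', Finset.mem_sdiff]
            constructor
            · rintro ⟨h1, h2⟩
              refine ⟨h1, h2, fun hwC => ?_⟩
              rw [hs'', Finset.mem_sdiff] at hu
              exact hu.2 (hclosed ⟨h2, hu.1, h1.symm⟩ hwC)
            · rintro ⟨h1, h2, _⟩
              exact ⟨h1, h2⟩
          have hsplit : ∑ u ∈ s, (G.neighborFinset u ∩ s).card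
              = ∑ u ∈ s'', (G.neighborFinset u ∩ s).card
                + ∑ u ∈ C, (G.neighborFinset u ∩ s).card := by
            rw [hs'']
            exact (Finset.sum_sdiff hCs).symm
          have h1 : ∑ u ∈ C, (G.neighborFinset u ∩ s).card ≤ (k - 2) * C.card := by
            calc ∑ u ∈ C, (G.neighborFinset u ∩ s).card ≤ ∑ _u ∈ C, (k - 2) :=
                Finset.sum_le_sum hCsum
              _ = (k - 2) * C.card := by rw [Finset.sum_const, smul_eq_mul, mul_comm]
          have h2 : ∑ u ∈ s'', (G.neighborFinset u ∩ s).card ≤ (k - 2) * s''.card := by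
            calc ∑ u ∈ s'', (G.neighborFinset u ∩ s).card
                = ∑ u ∈ s'', (G.neighborFinset u ∩ s'').card :=
                  Finset.sum_congr rfl (fun u hu => by rw [hOut u hu])
              _ ≤ (k - 2) * s''.card := IH
          have hcards : s''.card + C.card = s.card := by
            have h1 : s''.card = s.card - C.card := Finset.card_sdiff_of_subset hCs
            have h2 := Finset.card_le_card hCs
            omega
          calc ∑ u ∈ s, (G.neighborFinset u ∩ s).card
              = ∑ u ∈ s'', (G.neighborFinset u ∩ s).card
                + ∑ u ∈ C, (G.neighborFinset u ∩ s).card := hsplit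
            _ ≤ (k - 2) * s''.card + (k - 2) * C.card := by omega
            _ = (k - 2) * s.card := by rw [← hcards]; ring
        · -- big component: contradiction via lemR
          exfalso
          push_neg at hCk
          have hkC : k ≤ C.card := by omega
          letI fC : Fintype (↑(↑C : Set V)) := FinsetCoe.fintype C
          set H : SimpleGraph (↑C : Set V) := Gs.induce (↑C : Set V) with hH
          letI : DecidableRel H.Adj := Classical.decRel _
          have hCreach : ∀ a : (↑C : Set V), Gs.Reachable v₀ ↑a := by
            intro a
            have : (↑a : V) ∈ C := a.2
            exact (Finset.mem_filter.mp this).2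
          have hconnH : ∀ a b : (↑C : Set V), H.Reachable a b := by
            intro a b
            obtain ⟨q⟩ := (hCreach a).symm.trans (hCreach b)
            have hq : ∀ x ∈ q.support, x ∈ (↑C : Set V) := by
              have := support_subset_of_closed (G := Gs) (P := fun z => z ∈ C) hclosed q a.2
              intro x hx
              exact this x hx
            have hw := liftWalk q hq
            refine ⟨hw.copy ?_ ?_⟩ <;> exact Subtype.ext rfl
          have hdegH : ∀ a : (↑C : Set V), k - 1 ≤ 2 * H.degree a := by
            intro a
            have haC : (↑a : V) ∈ C := a.2
            have hcardeq : H.degree a = (G.neighborFinset ↑a ∩ C).card := by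
              rw [SimpleGraph.degree]
              refine Finset.card_bij (fun b _ => (b : V)) ?_ ?_ ?_
              · intro b hb
                rw [SimpleGraph.mem_neighborFinset] at hb
                rw [Finset.mem_inter, SimpleGraph.mem_neighborFinset]
                exact ⟨hb.2.2, b.2⟩
              · intro b1 _ b2 _ hb
                exact Subtype.ext hb
              · intro w hw
                rw [Finset.mem_inter, SimpleGraph.mem_neighborFinset] at hw
                refine ⟨⟨w, hw.2⟩, ?_, rfl⟩
                rw [SimpleGraph.mem_neighborFinset]
                exact (⟨hCs haC, hCs hw.2, hw.1⟩ : Gs.Adj ↑a w)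
            rw [hcardeq, ← hNC _ haC]
            exact hdeg _ (hCs haC)
          have hcardH : k ≤ Fintype.card (↑C : Set V) := by
            have : Fintype.card (↑C : Set V) = C.card := Fintype.card_coe C
            omega
          obtain ⟨a, b, w, hwpath, hwlen⟩ := lemR H k hk hconnH hdegH hcardH
          -- map the path down to G
          let f : H →g G := ⟨Subtype.val, fun {a b} h => h.2.2⟩
          have hfinj : Function.Injective f := Subtype.val_injective
          refine hpath ⟨↑a, ↑b, w.map f, ?_, ?_, ?_⟩
          · exact w.map_isPath_of_injective hfinj hwpath
          · rw [Walk.length_map]; exact hwlen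
          · intro x hx
            rw [Walk.support_map] at hx
            obtain ⟨z, _, rfl⟩ := List.mem_map.mp hx
            exact hCs z.2

end PVC

/-- Brešar et al.: if `G` is `d`-regular and `k ≥ 2` with `d ≥ k - 1`, then
`ψ_k(G) ≥ ((d - k + 2)/(2d - k + 2))·|V|`. -/
theorem stmt_2 {V : Type*} [Fintype V] (G : SimpleGraph V) [DecidableRel G.Adj]
    (d k : ℕ) (hk : 2 ≤ k) (hd : k - 1 ≤ d) (hreg : G.IsRegularOfDegree d) :
    (d + 2 - k) * Fintype.card V ≤ (2 * d + 2 - k) * psi G k := by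
  classical
  have hne : {n | ∃ F : Finset V, IsPathVertexCover G k F ∧ F.card = n}.Nonempty := by
    refine ⟨(Finset.univ : Finset V).card, Finset.univ, ?_, rfl⟩
    rintro ⟨u, v, w, -⟩
    have hu := u.2
    simp at hu
  obtain ⟨F, hF, hFcard⟩ := Nat.sInf_mem hne
  have hpsi : psi G k = F.card := hFcard.symm
  set S : Finset V := Finset.univ \ F with hSdef
  have hnopath : ¬ ∃ (u v : V) (w : G.Walk u v),
      w.IsPath ∧ w.length + 1 = k ∧ ∀ x ∈ w.support, x ∈ S := by
    rintro ⟨u, v, w, h1, h2, h3⟩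
    apply hF
    have hmem : ∀ x ∈ w.support, x ∈ ((↑F : Set V)ᶜ) := by
      intro x hx
      have hx2 := h3 x hx
      rw [hSdef, Finset.mem_sdiff] at hx2
      simp only [Set.mem_compl_iff, Finset.mem_coe]
      exact hx2.2
    exact ⟨_, _, PVC.liftWalk w hmem, PVC.liftWalk_isPath w hmem h1,
      by rw [PVC.liftWalk_length]; exact h2⟩
  have hA := PVC.lemA G k hk S.card S le_rfl hnopath
  have h1 : ∀ v ∈ S, (G.neighborFinset v ∩ S).card + (G.neighborFinset v ∩ F).card = d := by
    intro v hv
    have hNS : G.neighborFinset v ∩ S = G.neighborFinset v \ F := by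
      ext w; simp [hSdef]
    rw [hNS, Finset.card_sdiff_add_card_inter]
    exact hreg v
  have hsum : d * S.card
      = (∑ v ∈ S, (G.neighborFinset v ∩ S).card) + ∑ v ∈ S, (G.neighborFinset v ∩ F).card := by
    calc d * S.card = ∑ _v ∈ S, d := by rw [Finset.sum_const, smul_eq_mul, mul_comm]
      _ = ∑ v ∈ S, ((G.neighborFinset v ∩ S).card + (G.neighborFinset v ∩ F).card) :=
          Finset.sum_congr rfl (fun v hv => (h1 v hv).symm)
      _ = _ := Finset.sum_add_distrib
  have hfil : ∀ (t : Finset V) (w : V), G.neighborFinset w ∩ t = t.filter (G.Adj w ·) := by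
    intro t w; ext z; simp [SimpleGraph.mem_neighborFinset, and_comm]
  have hswap : ∑ v ∈ S, (G.neighborFinset v ∩ F).card
      = ∑ w ∈ F, (G.neighborFinset w ∩ S).card := by
    calc ∑ v ∈ S, (G.neighborFinset v ∩ F).card
        = ∑ v ∈ S, ∑ w ∈ F, (if G.Adj v w then 1 else 0) := by
          refine Finset.sum_congr rfl fun v _ => ?_
          rw [hfil F v, Finset.card_filter]
      _ = ∑ w ∈ F, ∑ v ∈ S, (if G.Adj v w then 1 else 0) := Finset.sum_comm
      _ = ∑ w ∈ F, (G.neighborFinset w ∩ S).card := by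
          refine Finset.sum_congr rfl fun w _ => ?_
          rw [hfil S w, Finset.card_filter]
          refine Finset.sum_congr rfl fun v _ => ?_
          exact if_congr (G.adj_comm v w) rfl rfl
  have h3 : ∑ w ∈ F, (G.neighborFinset w ∩ S).card ≤ d * F.card := by
    calc ∑ w ∈ F, (G.neighborFinset w ∩ S).card ≤ ∑ _w ∈ F, d :=
        Finset.sum_le_sum (fun w _ => by
          calc (G.neighborFinset w ∩ S).card ≤ (G.neighborFinset w).card :=
              Finset.card_le_card Finset.inter_subset_left
            _ = d := hreg w)
      _ = d * F.card := by rw [Finset.sum_const, smul_eq_mul, mul_comm]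
  have key : d * S.card ≤ (k - 2) * S.card + d * F.card := by
    rw [hsum, hswap]
    omega
  have hcards : S.card + F.card = Fintype.card V := by
    have h4 : S.card = Fintype.card V - F.card := by
      have h5 : (Finset.univ \ F).card = Finset.univ.card - F.card :=
        Finset.card_sdiff_of_subset (Finset.subset_univ F)
      rw [hSdef, h5, Finset.card_univ]
    have h6 := Finset.card_le_univ F
    omega
  have hd2 : k - 2 ≤ d := by omega
  have e1 : (d - (k - 2)) * S.card + (k - 2) * S.card = d * S.card := by
    rw [← Nat.add_mul]
    congr 1
    omega
  have key2 : (d - (k - 2)) * S.card ≤ d * F.card := by omega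
  have goal1 : (d - (k - 2)) * (S.card + F.card) ≤ (2 * d + 2 - k) * F.card := by
    rw [Nat.mul_add]
    have e2 : (d - (k - 2)) * F.card + d * F.card = (2 * d + 2 - k) * F.card := by
      rw [← Nat.add_mul]
      congr 1
      omega
    omega
  have e3 : d + 2 - k = d - (k - 2) := by omega
  rw [hpsi, e3, ← hcards]
  exact goal1
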